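/- For every real t ≥ 0 and every complex λ, lim_{n→∞} φ_n(t,λ) = exp( i^N · λ^N · α · t / N! ), where φ_n(t,λ) = ((1/N)·Σ_{k=0}^{N−1} exp(iλβω_k / n^{1/N}))^{⌊nt⌋}. -/

import Mathlib

open Complex Real Filter Finset Topology

private lemma pow_tendsto_cexp (u : ℕ → ℂ) (m : ℕ → ℕ) (w : ℂ)
    (hu : Tendsto u atTop (𝓝 1))
    (h : Tendsto (fun n => (m n : ℂ) * (u n - 1)) atTop (𝓝 w)) :
    Tendsto (fun n => u n ^ m n) atTop (𝓝 (Complex.exp w)) := by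
  set g : ℂ → ℂ := fun z => if z = 1 then 1 else Complex.log z / (z - 1) with hg_def
  have hlog1 : HasDerivAt Complex.log 1 1 := by
    simpa using Complex.hasDerivAt_log (z := 1) (by norm_num [Complex.mem_slitPlane_iff])
  have hg : Tendsto g (𝓝 1) (𝓝 1) := by
    have hsup : Tendsto g (𝓝[≠] (1:ℂ) ⊔ pure 1) (𝓝 1) := by
      rw [tendsto_sup]
      constructor
      · have h2 := hasDerivAt_iff_tendsto_slope.mp hlog1
        refine h2.congr' ?_
        filter_upwards [self_mem_nhdsWithin] with z hz
        simp only [Set.mem_compl_iff, Set.mem_singleton_iff] at hz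
        simp [slope_def_field, hg_def, hz, Complex.log_one, div_eq_inv_mul]
      · have hg1 : g 1 = 1 := by simp [hg_def]
        simpa [hg1] using (tendsto_pure_nhds g 1)
    rwa [nhdsNE_sup_pure] at hsup
  have hne : ∀ᶠ n in atTop, u n ≠ 0 := hu.eventually_ne one_ne_zero
  have hmul : Tendsto (fun n => (m n : ℂ) * Complex.log (u n)) atTop (𝓝 w) := by
    have h2 : Tendsto (fun n => ((m n : ℂ) * (u n - 1)) * g (u n)) atTop (𝓝 (w * 1)) :=
      h.mul (hg.comp hu)
    rw [mul_one] at h2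
    refine h2.congr fun n => ?_
    by_cases h1 : u n = 1
    · simp [hg_def, h1, Complex.log_one]
    · have hne1 : u n - 1 ≠ 0 := sub_ne_zero.mpr h1
      simp only [hg_def, if_neg h1]
      field_simp
  have hfin := (Complex.continuous_exp.tendsto w).comp hmul
  refine hfin.congr' ?_
  filter_upwards [hne] with n hn
  simp only [Function.comp_apply]
  rw [Complex.exp_nat_mul, Complex.exp_log hn]

private lemma omegaN (N : ℕ) (hN : 0 < N) (k : ℕ) :
    Complex.exp (2 * Real.pi * Complex.I * k / N) ^ N = 1 := by
  rw [← Complex.exp_nat_mul, Complex.exp_eq_one_iff]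
  refine ⟨k, ?_⟩
  have hN' : (N:ℂ) ≠ 0 := Nat.cast_ne_zero.mpr hN.ne'
  rw [mul_div_assoc', mul_div_cancel_left₀ _ hN']
  push_cast
  ring

private lemma omega_pow_sum (N : ℕ) (hN : 0 < N) (j : ℕ) (hj1 : 0 < j) (hj2 : j < N) :
    ∑ k ∈ Finset.range N, Complex.exp (2 * Real.pi * Complex.I * k / N) ^ j = 0 := by
  have hN' : (N:ℂ) ≠ 0 := Nat.cast_ne_zero.mpr hN.ne'
  have hrw : ∀ k : ℕ, Complex.exp (2 * Real.pi * Complex.I * k / N) ^ j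
      = Complex.exp (2 * Real.pi * Complex.I * j / N) ^ k := by
    intro k
    rw [← Complex.exp_nat_mul, ← Complex.exp_nat_mul]
    congr 1
    field_simp
  simp_rw [hrw]
  have hζ : Complex.exp (2 * Real.pi * Complex.I * j / N) ≠ 1 := by
    intro hone
    rw [Complex.exp_eq_one_iff] at hone
    obtain ⟨n, hn⟩ := hone
    have h2 : (2 * Real.pi * Complex.I : ℂ) ≠ 0 := by
      simp [Real.pi_ne_zero, Complex.I_ne_zero]
    have hj : (j : ℂ) = n * N := by
      field_simp at hn
      linear_combination hn
    have hjz : (j : ℤ) = n * N := by exact_mod_cast hj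
    have hn1 : 1 ≤ n := by nlinarith [hjz, (by exact_mod_cast hj1 : (0:ℤ) < j), (by exact_mod_cast hj2 : (j:ℤ) < N)]
    nlinarith [hjz, (by exact_mod_cast hj2 : (j:ℤ) < N), (by exact_mod_cast hN : (0:ℤ) < N)]
  rw [geom_sum_eq hζ]
  rw [← Complex.exp_nat_mul]
  have : (N : ℂ) * (2 * Real.pi * Complex.I * j / N) = j * (2 * Real.pi * Complex.I) := by
    field_simp
  rw [this, Complex.exp_nat_mul_two_pi_mul_I j]
  simp

private lemma avg_taylor (N : ℕ) (hN : 0 < N) (z : ℂ) :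
    (1 / (N:ℂ)) * ∑ k ∈ Finset.range N, ∑ j ∈ Finset.range (N+1),
        (z * Complex.exp (2 * Real.pi * Complex.I * k / N)) ^ j / (j.factorial : ℂ)
      = 1 + z ^ N / (N.factorial : ℂ) := by
  have hN' : (N:ℂ) ≠ 0 := Nat.cast_ne_zero.mpr hN.ne'
  rw [Finset.sum_comm]
  have hsub : ({0, N} : Finset ℕ) ⊆ Finset.range (N+1) := by
    intro x hx
    simp only [Finset.mem_insert, Finset.mem_singleton] at hx
    rcases hx with h | h <;> simp [h, Nat.lt_succ_iff, hN]
  have hzero : ∀ j ∈ Finset.range (N+1), j ∉ ({0, N} : Finset ℕ) →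
      (∑ k ∈ Finset.range N,
        (z * Complex.exp (2 * Real.pi * Complex.I * k / N)) ^ j / (j.factorial : ℂ)) = 0 := by
    intro j hj hj'
    simp only [Finset.mem_insert, Finset.mem_singleton, not_or] at hj'
    simp only [Finset.mem_range, Nat.lt_succ_iff] at hj
    have hj1 : 0 < j := Nat.pos_of_ne_zero hj'.1
    have hj2 : j < N := lt_of_le_of_ne hj hj'.2
    have := omega_pow_sum N hN j hj1 hj2
    have hfac : (∑ k ∈ Finset.range N,
        (z * Complex.exp (2 * Real.pi * Complex.I * k / N)) ^ j / (j.factorial : ℂ))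
        = (z ^ j / (j.factorial : ℂ)) *
          ∑ k ∈ Finset.range N, Complex.exp (2 * Real.pi * Complex.I * k / N) ^ j := by
      rw [Finset.mul_sum]
      exact Finset.sum_congr rfl fun k _ => by rw [mul_pow]; ring
    rw [hfac, this, mul_zero]
  rw [← Finset.sum_subset hsub hzero]
  rw [Finset.sum_pair (by omega : (0:ℕ) ≠ N)]
  simp only [pow_zero, Nat.factorial_zero, Nat.cast_one, div_one, Finset.sum_const,
    Finset.card_range, nsmul_eq_mul, mul_one]
  have hNterm : ∑ k ∈ Finset.range N,
      (z * Complex.exp (2 * Real.pi * Complex.I * k / N)) ^ N / (N.factorial : ℂ)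
      = N * (z ^ N / N.factorial) := by
    rw [Finset.sum_congr rfl fun k _ => by rw [mul_pow, omegaN N hN k, mul_one]]
    simp [Finset.sum_const, mul_comm]
  rw [hNterm]
  field_simp

private lemma avg_bound (N : ℕ) (hN : 0 < N) (z : ℂ) (hz : ‖z‖ ≤ 1) :
    ‖(1 / (N:ℂ)) * (∑ k ∈ Finset.range N,
        Complex.exp (z * Complex.exp (2 * Real.pi * Complex.I * k / N)))
        - (1 + z ^ N / (N.factorial : ℂ))‖
      ≤ ‖z‖ ^ (N+1) * ((N+2 : ℝ) * (((N+1).factorial : ℝ) * (N+1) : ℝ)⁻¹) := by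
  have hN' : (N:ℂ) ≠ 0 := Nat.cast_ne_zero.mpr hN.ne'
  have habsω : ∀ k : ℕ, ‖Complex.exp (2 * Real.pi * Complex.I * k / N)‖ = 1 := by
    intro k
    have harg : (2 * (Real.pi:ℂ) * Complex.I * k / N) = ((2 * Real.pi * k / N : ℝ) : ℂ) * Complex.I := by
      push_cast; ring
    rw [harg, Complex.norm_exp]
    simp
  have key := avg_taylor N hN z
  rw [← key, ← mul_sub, ← Finset.sum_sub_distrib]
  rw [norm_mul]
  have h1N : ‖1 / (N:ℂ)‖ = 1 / (N:ℝ) := by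
    simp [map_div₀]
  rw [h1N]
  have hbound : ∀ k ∈ Finset.range N,
      ‖Complex.exp (z * Complex.exp (2 * Real.pi * Complex.I * k / N))
        - ∑ j ∈ Finset.range (N+1),
            (z * Complex.exp (2 * Real.pi * Complex.I * k / N)) ^ j / (j.factorial : ℂ)‖
      ≤ ‖z‖ ^ (N+1) * ((N+2 : ℝ) * (((N+1).factorial : ℝ) * (N+1) : ℝ)⁻¹) := by
    intro k _
    have habs : ‖z * Complex.exp (2 * Real.pi * Complex.I * k / N)‖ = ‖z‖ := by
      rw [norm_mul, habsω k, mul_one]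
    have := Complex.exp_bound (x := z * Complex.exp (2 * Real.pi * Complex.I * k / N))
      (by rw [habs]; exact hz) (n := N+1) (Nat.succ_pos N)
    rw [habs] at this
    convert this using 3 <;> push_cast <;> ring
  calc 1 / (N:ℝ) * ‖∑ k ∈ Finset.range N, _‖
      ≤ 1 / (N:ℝ) * ∑ k ∈ Finset.range N,
          ‖Complex.exp (z * Complex.exp (2 * Real.pi * Complex.I * k / N))
            - ∑ j ∈ Finset.range (N+1),
                (z * Complex.exp (2 * Real.pi * Complex.I * k / N)) ^ j / (j.factorial : ℂ)‖ := by
        gcongr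
        exact norm_sum_le _ _
    _ ≤ 1 / (N:ℝ) * ∑ k ∈ Finset.range N,
          (‖z‖ ^ (N+1) * ((N+2 : ℝ) * (((N+1).factorial : ℝ) * (N+1) : ℝ)⁻¹)) := by
        gcongr with k hk
        exact hbound k hk
    _ = ‖z‖ ^ (N+1) * ((N+2 : ℝ) * (((N+1).factorial : ℝ) * (N+1) : ℝ)⁻¹) := by
        rw [Finset.sum_const, Finset.card_range, nsmul_eq_mul]
        field_simp

/-- for every t ≥ 0 and λ ∈ ℂ, the characteristic functions
φ_n(t,λ) = ((1/N)Σ_{k<N} exp(iλβω_k/n^{1/N}))^{⌊nt⌋} of the continuous-time random walk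
W_n(t) converge to exp(i^N λ^N α t / N!). -/
theorem char_fun_Wn_limit (N : ℕ) (hN : 2 < N) (α β : ℂ) (hβ : β ^ N = α)
    (t : ℝ) (ht : 0 ≤ t) (l : ℂ) :
    Filter.Tendsto
      (fun n : ℕ =>
        ((1 / (N : ℂ)) *
          ∑ k ∈ Finset.range N,
            Complex.exp (Complex.I * l * β * Complex.exp (2 * Real.pi * Complex.I * k / N) /
              ((((n : ℝ) ^ ((N : ℝ)⁻¹)) : ℝ) : ℂ))) ^ ⌊(n : ℝ) * t⌋₊)
      Filter.atTop
      (nhds (Complex.exp (Complex.I ^ N * l ^ N * α * (t : ℂ) / (Nat.factorial N : ℂ)))) := by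
  have hN0 : 0 < N := by omega
  have hN' : (N:ℂ) ≠ 0 := Nat.cast_ne_zero.mpr hN0.ne'
  set K : ℂ := Complex.I * l * β with hK
  set c : ℕ → ℝ := fun n => (n:ℝ) ^ ((N:ℝ)⁻¹) with hc
  set z : ℕ → ℂ := fun n => K / ((c n : ℝ) : ℂ) with hz_def
  set u : ℕ → ℂ := fun n => (1/(N:ℂ)) * ∑ k ∈ Finset.range N,
      Complex.exp (z n * Complex.exp (2 * Real.pi * Complex.I * k / N)) with hu_def
  set m : ℕ → ℕ := fun n => ⌊(n:ℝ)*t⌋₊ with hm_def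
  set w : ℂ := Complex.I ^ N * l ^ N * α * (t : ℂ) / (Nat.factorial N : ℂ) with hw_def
  -- rewrite the goal
  have hgoal_eq : (fun n : ℕ =>
        ((1 / (N : ℂ)) *
          ∑ k ∈ Finset.range N,
            Complex.exp (Complex.I * l * β * Complex.exp (2 * Real.pi * Complex.I * k / N) /
              ((((n : ℝ) ^ ((N : ℝ)⁻¹)) : ℝ) : ℂ))) ^ ⌊(n : ℝ) * t⌋₊)
      = fun n => u n ^ m n := by
    funext n
    congr 2
    refine Finset.sum_congr rfl fun k _ => ?_
    congr 1
    rw [hz_def, hK]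
    ring
  rw [hgoal_eq]
  -- basic limits
  have hc_top : Tendsto c atTop atTop := by
    exact (tendsto_rpow_atTop (by positivity : (0:ℝ) < (N:ℝ)⁻¹)).comp
      tendsto_natCast_atTop_atTop
  have hz0 : Tendsto z atTop (𝓝 0) := by
    have h1 : Tendsto (fun n => (c n)⁻¹) atTop (𝓝 0) := tendsto_inv_atTop_zero.comp hc_top
    have h2 : Tendsto (fun n => (((c n)⁻¹ : ℝ) : ℂ)) atTop (𝓝 ((0:ℝ):ℂ)) :=
      (Complex.continuous_ofReal.tendsto 0).comp h1
    rw [Complex.ofReal_zero] at h2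
    have h3 := h2.const_mul K
    rw [mul_zero] at h3
    refine h3.congr fun n => ?_
    rw [hz_def]
    push_cast
    rw [div_eq_mul_inv]
  have hu1 : Tendsto u atTop (𝓝 1) := by
    have hF : Continuous (fun v : ℂ => (1/(N:ℂ)) * ∑ k ∈ Finset.range N,
        Complex.exp (v * Complex.exp (2 * Real.pi * Complex.I * k / N))) := by
      continuity
    have hF0 : (1/(N:ℂ)) * ∑ k ∈ Finset.range N,
        Complex.exp ((0:ℂ) * Complex.exp (2 * Real.pi * Complex.I * k / N)) = 1 := by
      simp [Finset.sum_const]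
      field_simp
    have := (hF.tendsto 0).comp hz0
    rw [hF0] at this
    exact this
  -- the key limit for m n * (u n - 1)
  set w0 : ℂ := Complex.I ^ N * l ^ N * α / (Nat.factorial N : ℂ) with hw0_def
  have hcN : ∀ n : ℕ, c n ^ N = (n:ℝ) := fun n =>
    Real.rpow_inv_natCast_pow (Nat.cast_nonneg n) hN0.ne'
  have hc_pos : ∀ n : ℕ, 1 ≤ n → 0 < c n := by
    intro n hn
    have : (0:ℝ) < (n:ℝ) := by exact_mod_cast hn
    exact Real.rpow_pos_of_pos this _
  have h2 : Tendsto (fun n : ℕ => (n:ℂ) * (u n - 1)) atTop (𝓝 w0) := by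
    have hA : Tendsto (fun n : ℕ => (n:ℂ) * (u n - 1 - z n ^ N / (Nat.factorial N : ℂ)))
        atTop (𝓝 0) := by
      set CN : ℝ := (N+2 : ℝ) * (((N+1).factorial : ℝ) * (N+1) : ℝ)⁻¹ with hCN
      have hCN0 : 0 ≤ CN := by positivity
      have hg : Tendsto (fun n => ‖K‖ ^ (N+1) * CN / c n) atTop (𝓝 0) :=
        tendsto_const_nhds.div_atTop hc_top
      refine squeeze_zero_norm' ?_ hg
      have hzsmall : ∀ᶠ n in atTop, ‖z n‖ < 1 := by
        have h := hz0.norm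
        rw [norm_zero] at h
        have h' := h.eventually_lt_const one_pos
        simpa using h'
      filter_upwards [eventually_ge_atTop 1, hzsmall] with n hn1 hn2
      have hcpos := hc_pos n hn1
      have hnpos : (0:ℝ) < (n:ℝ) := by exact_mod_cast hn1
      have hb := avg_bound N hN0 (z n) hn2.le
      have heq : u n - 1 - z n ^ N / (Nat.factorial N : ℂ)
          = u n - (1 + z n ^ N / (Nat.factorial N : ℂ)) := by ring
      have habsz : ‖z n‖ = ‖K‖ / c n := by
        rw [hz_def]
        rw [norm_div]
        congr 1
        rw [Complex.norm_real, Real.norm_eq_abs, abs_of_pos hcpos]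
      calc ‖(n:ℂ) * (u n - 1 - z n ^ N / (Nat.factorial N : ℂ))‖
          = (n:ℝ) * ‖u n - (1 + z n ^ N / (Nat.factorial N : ℂ))‖ := by
            rw [heq, norm_mul, Complex.norm_natCast]
        _ ≤ (n:ℝ) * (‖z n‖ ^ (N+1) * CN) := by
            gcongr
        _ = ‖K‖ ^ (N+1) * CN / c n := by
            rw [habsz, div_pow]
            have hcN1 : c n ^ (N+1) = (n:ℝ) * c n := by rw [pow_succ, hcN]
            rw [hcN1]
            field_simp
    have hB : ∀ᶠ n : ℕ in atTop, (n:ℂ) * (u n - 1 - z n ^ N / (Nat.factorial N : ℂ))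
        + w0 = (n:ℂ) * (u n - 1) := by
      filter_upwards [eventually_ge_atTop 1] with n hn1
      have hcpos := hc_pos n hn1
      have hn0 : ((n:ℝ) : ℂ) ≠ 0 := by
        exact_mod_cast (show (n:ℝ) ≠ 0 by positivity)
      have hzN : (n:ℂ) * z n ^ N = K ^ N := by
        rw [hz_def, div_pow]
        rw [show (((c n : ℝ)):ℂ) ^ N = (((c n ^ N : ℝ)):ℂ) by push_cast; ring, hcN n]
        have hn' : (n:ℂ) ≠ 0 := Nat.cast_ne_zero.mpr (by omega)
        push_cast
        rw [mul_div_assoc', mul_comm, mul_div_assoc, div_self hn', mul_one]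
      have hKN : K ^ N = Complex.I ^ N * l ^ N * α := by
        rw [hK, mul_pow, mul_pow, hβ]
      have : (n:ℂ) * (u n - 1) = (n:ℂ) * (u n - 1 - z n ^ N / (Nat.factorial N : ℂ))
          + (n:ℂ) * z n ^ N / (Nat.factorial N : ℂ) := by ring
      rw [this, hzN, hKN, hw0_def]
    have := hA.add (tendsto_const_nhds (x := w0))
    rw [zero_add] at this
    exact this.congr' hB
  have h1 : Tendsto (fun n : ℕ => ((m n : ℝ)/(n:ℝ) : ℝ)) atTop (𝓝 t) := by
    have := (tendsto_nat_floor_mul_div_atTop ht).comp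
      (tendsto_natCast_atTop_atTop (R := ℝ))
    refine this.congr fun n => ?_
    simp only [Function.comp_apply, hm_def, mul_comm]
  have hmu : Tendsto (fun n : ℕ => (m n : ℂ) * (u n - 1)) atTop (𝓝 w) := by
    have h1' : Tendsto (fun n : ℕ => (((m n : ℝ)/(n:ℝ) : ℝ) : ℂ)) atTop (𝓝 (t:ℂ)) :=
      (Complex.continuous_ofReal.tendsto t).comp h1
    have hprod := h1'.mul h2
    have hwt : (t:ℂ) * w0 = w := by
      rw [hw0_def, hw_def]; ring
    rw [hwt] at hprod
    refine hprod.congr' ?_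
    filter_upwards [eventually_ge_atTop 1] with n hn1
    have hn0 : ((n:ℝ) : ℂ) ≠ 0 := by
      exact_mod_cast (show (n:ℝ) ≠ 0 by positivity)
    have hcast : ((((m n : ℝ)/(n:ℝ) : ℝ)) : ℂ) = (m n : ℂ) / (n : ℂ) := by push_cast; ring
    rw [hcast]
    have hn' : (n:ℂ) ≠ 0 := Nat.cast_ne_zero.mpr (by omega)
    have hx : ∀ x : ℂ, (m n : ℂ)/(n:ℂ) * ((n:ℂ) * x) = (m n : ℂ) * x := by
      intro x
      rw [div_mul_eq_mul_div, mul_comm (n:ℂ) x, ← mul_assoc, mul_div_assoc, div_self hn', mul_one]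
    exact hx _
  exact pow_tendsto_cexp u m w hu1 hmu
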